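/- Let $Z$ be a Banach space, $A$ a Fréchet differentiable map defined on a neighborhood of $0\in Z$, and $\Gamma$ a bounded linear operator on $Z$ such that $\mathrm{Id}-\Gamma$ is invertible. Suppose there exist $\rho>0$ and $\kappa\in(0,1)$ such that: (1) for each $z\in Z$ with $\|z\|\le\rho$, $\|(\mathrm{Id}-\Gamma)^{-1}\|\cdot\|d_zA-\Gamma\|\le\kappa$; (2) $\|(\mathrm{Id}-\Gamma)^{-1}\|\cdot\|A(0)\|\le(1-\kappa)\rho$. Then $A$ has a unique fixed point in the closed ball $\{z\in Z : \|z\|\le\rho\}$. -/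
import Mathlib


/-- A consequence of the Banach fixed point theorem: if `A` is differentiable on the closed
ball of radius `ρ`, `Id - Γ` is invertible (with inverse `G`), the derivative of `A` is
`κ`-close to `Γ` (weighted by `‖G‖`) on the ball, and `‖G‖·‖A 0‖ ≤ (1-κ)ρ`, then `A` has a
unique fixed point in the closed ball of radius `ρ`. -/
theorem fixed_point_theorem {Z : Type*} [NormedAddCommGroup Z] [NormedSpace ℝ Z]
    [CompleteSpace Z] (ρ κ : ℝ) (hρ : 0 < ρ) (hκ0 : 0 < κ) (hκ1 : κ < 1)
    (A : Z → Z) (A' : Z → Z →L[ℝ] Z)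
    (hdiff : ∀ z ∈ Metric.closedBall (0 : Z) ρ, HasFDerivAt A (A' z) z)
    (Γ G : Z →L[ℝ] Z)
    (hGl : ∀ z, G ((ContinuousLinearMap.id ℝ Z - Γ) z) = z)
    (hGr : ∀ z, (ContinuousLinearMap.id ℝ Z - Γ) (G z) = z)
    (h1 : ∀ z : Z, ‖z‖ ≤ ρ → ‖G‖ * ‖A' z - Γ‖ ≤ κ)
    (h2 : ‖G‖ * ‖A 0‖ ≤ (1 - κ) * ρ) :
    ∃! z : Z, ‖z‖ ≤ ρ ∧ A z = z := by
  set s : Set Z := Metric.closedBall (0 : Z) ρ with hs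
  set T : Z → Z := fun z => G (A z - Γ z) with hT
  have hcoe : (κ.toNNReal : ℝ) = κ := Real.coe_toNNReal κ hκ0.le
  -- fixed points of A and T coincide
  have key : ∀ z : Z, A z = z ↔ T z = z := by
    intro z
    constructor
    · intro h
      have hz : A z - Γ z = (ContinuousLinearMap.id ℝ Z - Γ) z := by
        simp [h, ContinuousLinearMap.sub_apply]
      simp only [hT, hz, hGl]
    · intro h
      have h3 := hGr (A z - Γ z)
      change (ContinuousLinearMap.id ℝ Z - Γ) (T z) = A z - Γ z at h3
      rw [h] at h3
      simp only [ContinuousLinearMap.sub_apply, ContinuousLinearMap.id_apply] at h3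
      exact (sub_left_inj.mp h3).symm
  -- T is κ-Lipschitz on s
  have hder : ∀ z ∈ s, HasFDerivWithinAt T (G.comp (A' z - Γ)) s z := by
    intro z hz
    exact (G.hasFDerivAt.comp z ((hdiff z hz).sub Γ.hasFDerivAt)).hasFDerivWithinAt
  have hbound : ∀ z ∈ s, ‖G.comp (A' z - Γ)‖₊ ≤ κ.toNNReal := by
    intro z hz
    have hz' : ‖z‖ ≤ ρ := by simpa [hs] using hz
    have := (G.opNorm_comp_le (A' z - Γ)).trans (h1 z hz')
    rw [← NNReal.coe_le_coe, hcoe, coe_nnnorm]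
    exact this
  have hK : LipschitzOnWith κ.toNNReal T s :=
    (convex_closedBall (0 : Z) ρ).lipschitzOnWith_of_nnnorm_hasFDerivWithin_le hder hbound
  have h0s : (0 : Z) ∈ s := by simp [hs, hρ.le]
  -- T maps s into s
  have hT0 : ‖T 0‖ ≤ (1 - κ) * ρ := by
    have : T 0 = G (A 0) := by simp [hT]
    rw [this]
    exact (G.le_opNorm (A 0)).trans h2
  have hmaps : ∀ z ∈ s, T z ∈ s := by
    intro z hz
    have hz' : ‖z‖ ≤ ρ := by simpa [hs] using hz
    have hd := hK.dist_le_mul z hz 0 h0s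
    rw [hcoe] at hd
    have h4 : ‖T z - T 0‖ ≤ κ * ‖z‖ := by simpa [dist_eq_norm] using hd
    have : ‖T z‖ ≤ κ * ‖z‖ + (1 - κ) * ρ := by
      calc ‖T z‖ ≤ ‖T z - T 0‖ + ‖T 0‖ := by simpa using norm_add_le (T z - T 0) (T 0)
        _ ≤ κ * ‖z‖ + (1 - κ) * ρ := add_le_add h4 hT0
    have : ‖T z‖ ≤ ρ := by nlinarith
    simpa [hs] using this
  -- set up the contraction on the subtype
  haveI : Nonempty s := ⟨⟨0, h0s⟩⟩
  haveI : CompleteSpace s := Metric.isClosed_closedBall.completeSpace_coe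
  set F : s → s := fun x => ⟨T x.1, hmaps x.1 x.2⟩ with hF
  have hFlip : LipschitzWith κ.toNNReal F := by
    apply LipschitzWith.of_dist_le_mul
    intro x y
    have := hK.dist_le_mul x.1 x.2 y.1 y.2
    simpa [hF, Subtype.dist_eq] using this
  have hcontr : ContractingWith κ.toNNReal F :=
    ⟨by rw [← NNReal.coe_lt_coe, hcoe]; exact_mod_cast hκ1, hFlip⟩
  obtain ⟨z0, hz0⟩ : ∃ x : s, F x = x := ⟨hcontr.fixedPoint F, hcontr.fixedPoint_isFixedPt⟩
  have hz0T : T z0.1 = z0.1 := congrArg Subtype.val hz0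
  refine ⟨z0.1, ⟨mem_closedBall_zero_iff.mp z0.2, (key z0.1).mpr hz0T⟩, ?_⟩
  rintro w ⟨hw, hAw⟩
  have hws : w ∈ s := by simpa [hs] using hw
  have hwT : T w = w := (key w).mp hAw
  have hd := hK.dist_le_mul w hws z0.1 z0.2
  rw [hwT, hz0T, hcoe] at hd
  have : dist w z0.1 = 0 := by nlinarith [dist_nonneg (x := w) (y := z0.1)]
  exact dist_eq_zero.mp this
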